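/- arXiv:hep-th/0103254 — 3 statements merged into one kernel-verified Lean document; each statement's English description precedes it below -/
import Mathlib

section
/- The matrices Rₙ(t) satisfy the unitarity condition R(z)·R^t(−z) = 1 of Givental's fundamental solution: for every integer k ≥ 1 and every t ∈ ℝ, ∑_{ℓ=0}^{k} (−1)^ℓ · R_{k−ℓ}(t) · (R_ℓ(t))ᵀ = 0 (the zero 2×2 matrix), where (·)ᵀ denotes the matrix transpose. -/
open Matrix

/-- `α₀ = 1` and, for `n ≥ 1`, `αₙ = ((-1)ⁿ/(8ⁿ·n!))·∏_{ℓ=1}^{n}(2ℓ-1)²`. -/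
noncomputable def alph (n : ℕ) : ℝ :=
  ((-1) ^ n / (8 ^ n * Nat.factorial n)) * ∏ ℓ ∈ Finset.range n, ((2 * (ℓ : ℝ) + 1)) ^ 2

/-- The coefficient matrices of Givental's fundamental solution for ℙ¹:
`R₀(t) = I` and, for `n ≥ 1`,
`Rₙ(t) = ((-1)ⁿ·αₙ/((2n-1)·2ⁿ))·exp(-n·t/2)·Mₙ` with
`(Mₙ)₊₊ = −1`, `(Mₙ)₊₋ = (-1)^{n+1}·2n·i`, `(Mₙ)₋₊ = 2n·i`,
`(Mₙ)₋₋ = (-1)^{n+1}` (index `+` is `0`, index `−` is `1`). -/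
noncomputable def RM : ℕ → ℝ → Matrix (Fin 2) (Fin 2) ℂ
  | 0, _ => 1
  | (n + 1), t =>
      (((-1 : ℂ) ^ (n + 1) * ((alph (n + 1) : ℝ) : ℂ) /
          ((2 * ((n : ℂ) + 1) - 1) * 2 ^ (n + 1))) *
        ((Real.exp (-(((n : ℝ) + 1)) * t / 2) : ℝ) : ℂ)) •
      !![-1, (-1 : ℂ) ^ (n + 2) * (2 * ((n : ℂ) + 1)) * Complex.I;
         (2 * ((n : ℂ) + 1)) * Complex.I, (-1 : ℂ) ^ (n + 2)]

/-- scalar coefficient -/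
noncomputable def gg (n : ℕ) (t : ℝ) : ℂ :=
  (-1) ^ n * ((alph n : ℝ) : ℂ) / ((2 * (n : ℂ) - 1) * 2 ^ n) *
    ((Real.exp (-(n : ℝ) * t / 2) : ℝ) : ℂ)

def Mm (n : ℕ) : Matrix (Fin 2) (Fin 2) ℂ :=
  !![-1, (-1 : ℂ) ^ (n + 1) * (2 * (n : ℂ)) * Complex.I;
     (2 * (n : ℂ)) * Complex.I, (-1 : ℂ) ^ (n + 1)]

lemma RM_succ (n : ℕ) (t : ℝ) : RM (n + 1) t = gg (n + 1) t • Mm (n + 1) := by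
  rw [RM, gg, Mm]
  congr 2 <;> push_cast <;> ring_nf

lemma alph_succ (n : ℕ) :
    alph (n + 1) = -(2 * (n : ℝ) + 1) ^ 2 * alph n / (8 * ((n : ℝ) + 1)) := by
  unfold alph
  rw [Finset.prod_range_succ, pow_succ, pow_succ, Nat.factorial_succ]
  have h1 : (8 : ℝ) ^ n ≠ 0 := by positivity
  have h2 : ((Nat.factorial n : ℝ)) ≠ 0 := by positivity
  have h3 : ((n : ℝ) + 1) ≠ 0 := by positivity
  push_cast
  field_simp

noncomputable def ex (t : ℝ) : ℂ := ((Real.exp (-t / 2) : ℝ) : ℂ)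

lemma exp_split (n : ℕ) (t : ℝ) :
    ((Real.exp (-((n : ℝ) + 1) * t / 2) : ℝ) : ℂ) =
      ((Real.exp (-(n : ℝ) * t / 2) : ℝ) : ℂ) * ex t := by
  rw [ex, ← Complex.ofReal_mul, ← Real.exp_add]
  norm_num
  ring_nf

lemma cast_ne (n : ℕ) : (2 * (n : ℂ) - 1) ≠ 0 := by
  intro h
  have h2 : ((2 * n : ℕ) : ℂ) = ((1 : ℕ) : ℂ) := by push_cast; linear_combination h
  have := Nat.cast_injective (R := ℂ) h2
  omega

lemma gg_succ (n : ℕ) (t : ℝ) :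
    gg (n + 1) t =
      (2 * (n : ℂ) + 1) * (2 * (n : ℂ) - 1) * gg n t * ex t / (16 * ((n : ℂ) + 1)) := by
  rw [gg, gg, alph_succ]
  have e1 : ((Real.exp (-(↑(n+1) : ℝ) * t / 2) : ℝ) : ℂ)
      = ((Real.exp (-(n : ℝ) * t / 2) : ℝ) : ℂ) * ex t := by
    rw [← exp_split]; push_cast; ring_nf
  push_cast
  push_cast at e1
  rw [e1]
  have h1 := cast_ne n
  have h2 := cast_ne (n + 1)
  push_cast at h2
  have h3 : ((n : ℂ) + 1) ≠ 0 := Nat.cast_add_one_ne_zero n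
  have h4 : (2 : ℂ) ^ n ≠ 0 := pow_ne_zero _ two_ne_zero
  field_simp
  ring

lemma gg_zero (t : ℝ) : gg 0 t = -1 := by
  rw [gg, alph]
  norm_num

lemma gg_one (t : ℝ) : gg 1 t = ex t / 16 := by
  have := gg_succ 0 t
  rw [gg_zero] at this
  rw [this]
  norm_num

lemma transp2 (a b c d : ℂ) : (!![a, b; c, d])ᵀ = !![a, c; b, d] := by
  ext i j
  fin_cases i <;> fin_cases j <;> simp

lemma interiorTerm (a b : ℕ) (t : ℝ) :
    ((-1 : ℂ) ^ (a + 1)) • (RM (b + 1) t * (RM (a + 1) t)ᵀ) =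
      ((-1 : ℂ) ^ (a + 1) * (gg (b + 1) t * gg (a + 1) t)) •
        !![1 - (-1 : ℂ) ^ (a + b) * (4 * ((b : ℂ) + 1) * ((a : ℂ) + 1)),
            ((-1 : ℂ) ^ (a + b) * (2 * ((b : ℂ) + 1)) - 2 * ((a : ℂ) + 1)) * Complex.I;
           ((-1 : ℂ) ^ (a + b) * (2 * ((a : ℂ) + 1)) - 2 * ((b : ℂ) + 1)) * Complex.I,
            (-1 : ℂ) ^ (a + b) - 4 * ((b : ℂ) + 1) * ((a : ℂ) + 1)] := by
  rw [RM_succ, RM_succ, Matrix.transpose_smul, Matrix.smul_mul, Matrix.mul_smul, Mm, Mm,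
    transp2, Matrix.mul_fin_two]
  ext i j
  fin_cases i <;> fin_cases j <;>
    simp [Matrix.smul_apply] <;>
    ring_nf <;>
    simp [Complex.I_sq, pow_succ] <;>
    ring

lemma tele (a b : ℕ) (t : ℝ) :
    ((a : ℂ) + (b : ℂ) + 3) * ((-1 : ℂ) ^ (a + 1) * (gg (b + 2) t * gg (a + 1) t)) *
        (1 - 4 * ((b : ℂ) + 2) * ((a : ℂ) + 1)) =
      (-1 : ℂ) ^ (a + 2) * (gg (b + 1) t * gg (a + 2) t) *
          ((2 * ((b : ℂ) + 1) - 1) * ((a : ℂ) + 2) *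
            (2 * ((a : ℂ) + (b : ℂ) + 3) + 1 - 2 * ((a : ℂ) + 2))) -
        (-1 : ℂ) ^ (a + 1) * (gg (b + 2) t * gg (a + 1) t) *
          ((2 * ((b : ℂ) + 2) - 1) * ((a : ℂ) + 1) *
            (2 * ((a : ℂ) + (b : ℂ) + 3) + 1 - 2 * ((a : ℂ) + 1))) := by
  have e1 := gg_succ (b + 1) t
  have e2 := gg_succ (a + 1) t
  push_cast at e1 e2
  rw [show b + 2 = (b + 1) + 1 from rfl, show a + 2 = (a + 1) + 1 from rfl]
  push_cast
  rw [e1, e2]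
  have hb : ((b : ℂ) + 1 + 1) ≠ 0 := by
    intro h; have : ((b + 2 : ℕ) : ℂ) = ((0 : ℕ) : ℂ) := by push_cast; linear_combination h
    exact absurd (Nat.cast_injective (R := ℂ) this) (by omega)
  have ha : ((a : ℂ) + 1 + 1) ≠ 0 := by
    intro h; have : ((a + 2 : ℕ) : ℂ) = ((0 : ℕ) : ℂ) := by push_cast; linear_combination h
    exact absurd (Nat.cast_injective (R := ℂ) this) (by omega)
  field_simp
  ring

lemma sum_refl_zero (K : ℕ) (F : ℕ → ℂ) (hsym : ∀ j < K, F (K - 1 - j) = - F j) :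
    ∑ j ∈ Finset.range K, F j = 0 := by
  apply Finset.sum_involution (g := fun j _ => K - 1 - j)
  · intro j hj
    rw [Finset.mem_range] at hj
    rw [hsym j hj]
    ring
  · intro j hj hF heq
    rw [Finset.mem_range] at hj
    have h2 := hsym j hj
    rw [heq] at h2
    apply hF
    have h3 : F j + F j = 0 := by linear_combination h2
    exact add_self_eq_zero.mp h3
  · intro j hj
    rw [Finset.mem_range] at hj ⊢
    omega
  · intro j hj
    rw [Finset.mem_range] at hj
    omega

lemma sign_flip {a b n : ℕ} (h : a + b = n) (hodd : Odd n) :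
    (-1 : ℂ) ^ a = -(-1 : ℂ) ^ b := by
  have h1 : (-1 : ℂ) ^ a * (-1 : ℂ) ^ b = -1 := by
    rw [← pow_add, h]; exact hodd.neg_one_pow
  have h2 : (-1 : ℂ) ^ b * (-1 : ℂ) ^ b = 1 := by
    rw [← pow_add]; exact (Even.neg_one_pow ⟨b, rfl⟩)
  linear_combination ((-1 : ℂ) ^ b) * h1 - ((-1 : ℂ) ^ a) * h2

lemma sign_same {a b n : ℕ} (h : a + b = n) (heven : Even n) :
    (-1 : ℂ) ^ a = (-1 : ℂ) ^ b := by
  have h1 : (-1 : ℂ) ^ a * (-1 : ℂ) ^ b = 1 := by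
    rw [← pow_add, h]; exact heven.neg_one_pow
  have h2 : (-1 : ℂ) ^ b * (-1 : ℂ) ^ b = 1 := by
    rw [← pow_add]; exact (Even.neg_one_pow ⟨b, rfl⟩)
  linear_combination ((-1 : ℂ) ^ b) * h1 - ((-1 : ℂ) ^ a) * h2

lemma boundaryTerm (K : ℕ) (t : ℝ) :
    RM (K + 1) t + ((-1 : ℂ) ^ (K + 1)) • (RM (K + 1) t)ᵀ =
      (gg (K + 1) t * ((-1 : ℂ) ^ (K + 2) - 1)) • (1 : Matrix (Fin 2) (Fin 2) ℂ) := by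
  rw [RM_succ, Matrix.transpose_smul, Mm, transp2]
  ext i j
  fin_cases i <;> fin_cases j <;>
    simp [Matrix.smul_apply, Matrix.one_apply] <;>
    ring_nf <;>
    simp [show ((-1 : ℂ)) ^ (K * 2) = 1 from by rw [mul_comm, pow_mul]; norm_num] <;>
    ring

lemma natcast_succ_ne (c : ℕ) : ((c : ℂ) + 2) ≠ 0 := by
  intro h
  have : ((c + 2 : ℕ) : ℂ) = ((0 : ℕ) : ℂ) := by push_cast; linear_combination h
  exact absurd (Nat.cast_injective (R := ℂ) this) (by omega)

lemma key_diag_even (K : ℕ) (t : ℝ) (heven : Even (K + 1)) :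
    ∑ j ∈ Finset.range K,
        (-1 : ℂ) ^ (j + 1) * (gg (K - j) t * gg (j + 1) t) *
          (1 - 4 * ((K - j : ℕ) : ℂ) * ((j : ℂ) + 1)) =
      2 * gg (K + 1) t := by
  have hK : 1 ≤ K := by rcases heven with ⟨m, hm⟩; omega
  obtain ⟨c, rfl⟩ : ∃ c, K = c + 1 := ⟨K - 1, by omega⟩
  have hc2 : ((c : ℂ) + 2) ≠ 0 := natcast_succ_ne c
  apply mul_left_cancel₀ hc2
  rw [Finset.mul_sum, Finset.sum_range_succ]
  set G : ℕ → ℂ := fun j =>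
    (-1 : ℂ) ^ (j + 1) * (gg (c + 1 - j) t * gg (j + 1) t) *
      ((2 * ((c + 1 - j : ℕ) : ℂ) - 1) * ((j : ℂ) + 1) *
        (2 * ((c : ℂ) + 2) + 1 - 2 * ((j : ℂ) + 1))) with hG
  have htel : ∀ j ∈ Finset.range c,
      ((c : ℂ) + 2) * ((-1 : ℂ) ^ (j + 1) * (gg (c + 1 - j) t * gg (j + 1) t) *
        (1 - 4 * ((c + 1 - j : ℕ) : ℂ) * ((j : ℂ) + 1))) = G (j + 1) - G j := by
    intro j hj
    rw [Finset.mem_range] at hj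
    obtain ⟨b, hb⟩ : ∃ b, c + 1 - j = b + 2 := ⟨c - 1 - j, by omega⟩
    have hcb : (c : ℂ) = (j : ℂ) + (b : ℂ) + 1 := by
      have : c = j + b + 1 := by omega
      rw [this]; push_cast; ring
    simp only [hG]
    rw [hb, show c + 1 - (j + 1) = b + 1 by omega]
    push_cast
    rw [hcb]
    linear_combination tele j b t
  rw [Finset.sum_congr rfl htel, Finset.sum_range_sub G]
  simp only [hG]
  rw [show c + 1 - c = 1 by omega, Nat.sub_zero, gg_one,
    show c + 1 + 1 = (c + 1) + 1 from rfl, gg_succ (c + 1) t]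
  have hodd : Odd (c + 1) := by
    rcases heven with ⟨m, hm⟩
    refine ⟨m - 1, ?_⟩
    omega
  rw [hodd.neg_one_pow]
  have hne : ((c : ℂ) + 1 + 1) ≠ 0 := by intro h; apply hc2; linear_combination h
  push_cast
  field_simp
  ring

lemma key_refl_odd (K : ℕ) (t : ℝ) (w : ℕ → ℂ) (hodd : Odd (K + 1))
    (hw : ∀ j < K, w (K - 1 - j) = w j) :
    ∑ j ∈ Finset.range K, (-1 : ℂ) ^ (j + 1) * (gg (K - j) t * gg (j + 1) t) * w j = 0 := by
  apply sum_refl_zero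
  intro j hj
  rw [hw j hj, show K - (K - 1 - j) = j + 1 by omega, show K - 1 - j + 1 = K - j by omega,
    sign_flip (show (K - j) + (j + 1) = K + 1 by omega) hodd]
  ring

lemma key_refl_even (K : ℕ) (t : ℝ) (w : ℕ → ℂ) (heven : Even (K + 1))
    (hw : ∀ j < K, w (K - 1 - j) = -w j) :
    ∑ j ∈ Finset.range K, (-1 : ℂ) ^ (j + 1) * (gg (K - j) t * gg (j + 1) t) * w j = 0 := by
  apply sum_refl_zero
  intro j hj
  rw [hw j hj, show K - (K - 1 - j) = j + 1 by omega, show K - 1 - j + 1 = K - j by omega,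
    sign_same (show (K - j) + (j + 1) = K + 1 by omega) heven]
  ring

/-- Unitarity `R(z)·R^t(−z) = 1` of Givental's fundamental solution: for every
`k ≥ 1` and every real `t`, `∑_{ℓ=0}^{k} (−1)^ℓ·R_{k−ℓ}(t)·(R_ℓ(t))ᵀ = 0`. -/
theorem stmt9 (k : ℕ) (hk : 1 ≤ k) (t : ℝ) :
    ∑ ℓ ∈ Finset.range (k + 1), ((-1 : ℂ) ^ ℓ) • (RM (k - ℓ) t * (RM ℓ t)ᵀ) = 0 := by
  obtain ⟨K, rfl⟩ : ∃ K, k = K + 1 := ⟨k - 1, by omega⟩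
  clear hk
  rw [Finset.sum_range_succ, Finset.sum_range_succ']
  have h0 : ((-1 : ℂ) ^ (0 : ℕ)) • (RM (K + 1 - 0) t * (RM 0 t)ᵀ) = RM (K + 1) t := by
    simp [RM]
  have hk' : ((-1 : ℂ) ^ (K + 1)) • (RM (K + 1 - (K + 1)) t * (RM (K + 1) t)ᵀ) =
      ((-1 : ℂ) ^ (K + 1)) • (RM (K + 1) t)ᵀ := by
    simp [RM]
  rw [h0, hk', add_assoc, boundaryTerm]
  have hS : ∀ j ∈ Finset.range K,
      ((-1 : ℂ) ^ (j + 1)) • (RM (K + 1 - (j + 1)) t * (RM (j + 1) t)ᵀ) =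
        ((-1 : ℂ) ^ (j + 1) * (gg (K - j) t * gg (j + 1) t)) •
          !![1 - (-1 : ℂ) ^ (K + 1) * (4 * ((K - j : ℕ) : ℂ) * ((j : ℂ) + 1)),
              ((-1 : ℂ) ^ (K + 1) * (2 * ((K - j : ℕ) : ℂ)) - 2 * ((j : ℂ) + 1)) * Complex.I;
             ((-1 : ℂ) ^ (K + 1) * (2 * ((j : ℂ) + 1)) - 2 * ((K - j : ℕ) : ℂ)) * Complex.I,
              (-1 : ℂ) ^ (K + 1) - 4 * ((K - j : ℕ) : ℂ) * ((j : ℂ) + 1)] := by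
    intro j hj
    rw [Finset.mem_range] at hj
    obtain ⟨b, hb⟩ : ∃ b, K - j = b + 1 := ⟨K - j - 1, by omega⟩
    rw [show K + 1 - (j + 1) = b + 1 by omega, hb,
      show (K + 1) = (j + b) + 2 by omega, interiorTerm j b t]
    rw [show (-1 : ℂ) ^ (j + b + 2) = (-1 : ℂ) ^ (j + b) by rw [pow_succ, pow_succ]; ring]
    push_cast
    ring_nf
  rw [Finset.sum_congr rfl hS]
  rcases Nat.even_or_odd (K + 1) with hpar | hpar
  · have hs1 : (-1 : ℂ) ^ (K + 1) = 1 := hpar.neg_one_pow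
    have hs2 : (-1 : ℂ) ^ (K + 2) = -1 := by
      refine Odd.neg_one_pow ?_
      rcases hpar with ⟨m, hm⟩
      exact ⟨m, by omega⟩
    simp only [hs1, hs2, one_mul]
    ext i j'
    fin_cases i <;> fin_cases j' <;>
      simp [Matrix.sum_apply, Matrix.smul_apply, Matrix.one_apply]
    · linear_combination key_diag_even K t hpar
    · have e : ∑ x ∈ Finset.range K, (-1 : ℂ) ^ (x + 1) * (gg (K - x) t * gg (x + 1) t) *
            ((2 * ((K - x : ℕ) : ℂ) - 2 * ((x : ℂ) + 1)) * Complex.I) =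
          (∑ x ∈ Finset.range K, (-1 : ℂ) ^ (x + 1) * (gg (K - x) t * gg (x + 1) t) *
            (2 * ((K - x : ℕ) : ℂ) - 2 * ((x : ℂ) + 1))) * Complex.I := by
        rw [Finset.sum_mul]
        exact Finset.sum_congr rfl fun x _ => by ring
      rw [e, key_refl_even K t _ hpar ?_, zero_mul]
      intro j hj
      have hc : ((K - 1 - j : ℕ) : ℂ) + 1 = ((K - j : ℕ) : ℂ) := by
        rw [show K - j = (K - 1 - j) + 1 by omega]; push_cast; ring
      rw [show K - (K - 1 - j) = j + 1 by omega, hc]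
      push_cast
      ring
    · have e : ∑ x ∈ Finset.range K, (-1 : ℂ) ^ (x + 1) * (gg (K - x) t * gg (x + 1) t) *
            ((2 * ((x : ℂ) + 1) - 2 * ((K - x : ℕ) : ℂ)) * Complex.I) =
          (∑ x ∈ Finset.range K, (-1 : ℂ) ^ (x + 1) * (gg (K - x) t * gg (x + 1) t) *
            (2 * ((x : ℂ) + 1) - 2 * ((K - x : ℕ) : ℂ))) * Complex.I := by
        rw [Finset.sum_mul]
        exact Finset.sum_congr rfl fun x _ => by ring
      rw [e, key_refl_even K t _ hpar ?_, zero_mul]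
      intro j hj
      have hc : ((K - 1 - j : ℕ) : ℂ) + 1 = ((K - j : ℕ) : ℂ) := by
        rw [show K - j = (K - 1 - j) + 1 by omega]; push_cast; ring
      rw [show K - (K - 1 - j) = j + 1 by omega, hc]
      push_cast
      ring
    · linear_combination key_diag_even K t hpar
  · have hs1 : (-1 : ℂ) ^ (K + 1) = -1 := hpar.neg_one_pow
    have hs2 : (-1 : ℂ) ^ (K + 2) = 1 := by
      refine Even.neg_one_pow ?_
      rcases hpar with ⟨m, hm⟩
      exact ⟨m + 1, by omega⟩
    simp only [hs1, hs2]
    ext i j'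
    fin_cases i <;> fin_cases j' <;>
      simp [Matrix.sum_apply, Matrix.smul_apply, Matrix.one_apply]
    · refine key_refl_odd K t _ hpar ?_
      intro j hj
      have hc : ((K - 1 - j : ℕ) : ℂ) + 1 = ((K - j : ℕ) : ℂ) := by
        rw [show K - j = (K - 1 - j) + 1 by omega]; push_cast; ring
      rw [show K - (K - 1 - j) = j + 1 by omega, hc]
      push_cast
      ring
    · have e : ∑ x ∈ Finset.range K, (-1 : ℂ) ^ (x + 1) * (gg (K - x) t * gg (x + 1) t) *
            ((-(2 * ((K - x : ℕ) : ℂ)) - 2 * ((x : ℂ) + 1)) * Complex.I) =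
          (∑ x ∈ Finset.range K, (-1 : ℂ) ^ (x + 1) * (gg (K - x) t * gg (x + 1) t) *
            (-(2 * ((K - x : ℕ) : ℂ)) - 2 * ((x : ℂ) + 1))) * Complex.I := by
        rw [Finset.sum_mul]
        exact Finset.sum_congr rfl fun x _ => by ring
      rw [e, key_refl_odd K t _ hpar ?_, zero_mul]
      intro j hj
      have hc : ((K - 1 - j : ℕ) : ℂ) + 1 = ((K - j : ℕ) : ℂ) := by
        rw [show K - j = (K - 1 - j) + 1 by omega]; push_cast; ring
      rw [show K - (K - 1 - j) = j + 1 by omega, hc]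
      push_cast
      ring
    · have e : ∑ x ∈ Finset.range K, (-1 : ℂ) ^ (x + 1) * (gg (K - x) t * gg (x + 1) t) *
            ((-(2 * ((x : ℂ) + 1)) - 2 * ((K - x : ℕ) : ℂ)) * Complex.I) =
          (∑ x ∈ Finset.range K, (-1 : ℂ) ^ (x + 1) * (gg (K - x) t * gg (x + 1) t) *
            (-(2 * ((x : ℂ) + 1)) - 2 * ((K - x : ℕ) : ℂ))) * Complex.I := by
        rw [Finset.sum_mul]
        exact Finset.sum_congr rfl fun x _ => by ring
      rw [e, key_refl_odd K t _ hpar ?_, zero_mul]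
      intro j hj
      have hc : ((K - 1 - j : ℕ) : ℂ) + 1 = ((K - j : ℕ) : ℂ) := by
        rw [show K - j = (K - 1 - j) + 1 by omega]; push_cast; ring
      rw [show K - (K - 1 - j) = j + 1 by omega, hc]
      push_cast
      ring
    · refine key_refl_odd K t _ hpar ?_
      intro j hj
      have hc : ((K - 1 - j : ℕ) : ℂ) + 1 = ((K - j : ℕ) : ℂ) := by
        rw [show K - j = (K - 1 - j) + 1 by omega]; push_cast; ring
      rw [show K - (K - 1 - j) = j + 1 by omega, hc]
      push_cast
      ring
end

section
/- For every real x and every integer m ≥ 1, ∑_{n=0}^{m} ((−1)ⁿ + (−1)^{m−n})·fₙ·h_{m−n} = 0; equivalently, the formal power series f(z) = ∑ fₙ zⁿ and h(z) = ∑ hₙ zⁿ satisfy f(z)·h(−z) + f(−z)·h(z) = 2. (This is the scalar form of the unitarity of Givental's fundamental solution, and expresses the cancellation of the singular part of V^{++}(z,w) at w = −z.) -/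
/-- `f₀ = 1` and `fₙ = (−1)ⁿ·αₙ·xⁿ` (the formula also gives `f₀ = 1` at `n = 0`):
coefficient sequence of the component `S₀⁺` of Givental's fundamental solution. -/
noncomputable def fSeq (x : ℝ) (n : ℕ) : ℝ := (-1) ^ n * alph n * x ^ n

/-- `h₀ = 1` and `hₙ = −(−1)ⁿ·((2n+1)/(2n−1))·αₙ·xⁿ` (the formula also gives
`h₀ = 1` at `n = 0`): coefficient sequence of the component `S₁⁺` of Givental's
fundamental solution. -/
noncomputable def hSeq (x : ℝ) (n : ℕ) : ℝ :=
  -((-1) ^ n * ((2 * (n : ℝ) + 1) / (2 * (n : ℝ) - 1)) * alph n * x ^ n)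

open Finset

/-- The unsigned version of `alph`. -/
noncomputable def pp (n : ℕ) : ℝ :=
  (1 / (8 ^ n * Nat.factorial n)) * ∏ ℓ ∈ Finset.range n, ((2 * (ℓ : ℝ) + 1)) ^ 2

/-- The unsigned coefficient sequence of `h`. -/
noncomputable def qq (n : ℕ) : ℝ :=
  -((2 * (n : ℝ) + 1) / (2 * (n : ℝ) - 1)) * pp n

lemma pp_zero : pp 0 = 1 := by simp [pp]

lemma qq_zero : qq 0 = 1 := by norm_num [qq, pp_zero]

lemma alph_eq (n : ℕ) : alph n = (-1) ^ n * pp n := by unfold alph pp; ring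

lemma two_mul_add_one_ne (n : ℕ) : (2 * (n : ℝ) + 1) ≠ 0 := by positivity

lemma two_mul_sub_one_ne (n : ℕ) : (2 * (n : ℝ) - 1) ≠ 0 := by
  have h : (2 * n : ℕ) ≠ 1 := by omega
  have h2 : ((2 * n : ℕ) : ℝ) ≠ 1 := by exact_mod_cast h
  push_cast at h2
  intro hc; apply h2; linarith

lemma pp_succ (n : ℕ) : pp (n + 1) = pp n * (2 * (n : ℝ) + 1) ^ 2 / (8 * ((n : ℝ) + 1)) := by
  have hf : ((Nat.factorial n : ℝ)) ≠ 0 := by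
    exact_mod_cast Nat.factorial_ne_zero n
  have h8 : ((8 : ℝ) ^ n) ≠ 0 := by positivity
  have hn1 : ((n : ℝ) + 1) ≠ 0 := by positivity
  unfold pp
  rw [prod_range_succ, pow_succ, Nat.factorial_succ]
  push_cast
  field_simp

lemma idA (n : ℕ) : (n : ℝ) * pp n = pp (n + 1) - pp n / 2 - qq (n + 1) := by
  have h1 : (2 * (n : ℝ) + 1) ≠ 0 := two_mul_add_one_ne n
  have h1' : (2 * ((n : ℕ) + 1 : ℕ) : ℝ) - 1 ≠ 0 := two_mul_sub_one_ne (n + 1)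
  have hn1 : ((n : ℝ) + 1) ≠ 0 := by positivity
  unfold qq
  rw [pp_succ]
  push_cast at h1' ⊢
  have h1'' : (2 * ((n : ℝ) + 1) - 1) ≠ 0 := h1'
  field_simp
  ring

lemma idB (n : ℕ) : (n : ℝ) * qq n = qq (n + 1) + qq n / 2 - pp (n + 1) := by
  have h1 : (2 * (n : ℝ) + 1) ≠ 0 := two_mul_add_one_ne n
  have h2 : (2 * (n : ℝ) - 1) ≠ 0 := two_mul_sub_one_ne n
  have h1' : (2 * ((n : ℕ) + 1 : ℕ) : ℝ) - 1 ≠ 0 := two_mul_sub_one_ne (n + 1)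
  have hn1 : ((n : ℝ) + 1) ≠ 0 := by positivity
  unfold qq
  rw [pp_succ]
  push_cast at h1' ⊢
  have h1'' : (2 * ((n : ℝ) + 1) - 1) ≠ 0 := h1'
  field_simp
  have h3 : (n : ℝ) * 2 - 1 ≠ 0 := by rw [mul_comm]; exact h2
  field_simp
  ring

lemma neg_one_pow_sub {n m : ℕ} (h : n ≤ m) : (-1 : ℝ) ^ (m - n) = (-1) ^ m * (-1) ^ n := by
  have hsq : ((-1 : ℝ) ^ n) * ((-1 : ℝ) ^ n) = 1 := by
    rw [← mul_pow]; norm_num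
  have key : (-1 : ℝ) ^ (m - n) * (-1) ^ n = (-1) ^ m := by
    rw [← pow_add, Nat.sub_add_cancel h]
  calc (-1 : ℝ) ^ (m - n) = (-1 : ℝ) ^ (m - n) * (((-1 : ℝ) ^ n) * ((-1 : ℝ) ^ n)) := by
        rw [hsq, mul_one]
    _ = ((-1 : ℝ) ^ (m - n) * (-1) ^ n) * (-1) ^ n := by ring
    _ = (-1) ^ m * (-1) ^ n := by rw [key]

lemma antisym (g : ℕ → ℝ) (M : ℕ) (hM : Odd M) :
    ∑ n ∈ range (M + 1), (-1 : ℝ) ^ n * g n * g (M - n) = 0 := by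
  have hre := Finset.sum_range_reflect (fun n => (-1 : ℝ) ^ n * g n * g (M - n)) (M + 1)
  have h2 : ∑ j ∈ range (M + 1),
      (fun n => (-1 : ℝ) ^ n * g n * g (M - n)) (M + 1 - 1 - j)
      = ∑ j ∈ range (M + 1), -((-1 : ℝ) ^ j * g j * g (M - j)) := by
    apply sum_congr rfl
    intro j hj
    have hjM : j ≤ M := Nat.lt_succ_iff.mp (mem_range.mp hj)
    simp only [Nat.add_sub_cancel]
    rw [Nat.sub_sub_self hjM, neg_one_pow_sub hjM, hM.neg_one_pow]
    ring
  rw [h2, Finset.sum_neg_distrib] at hre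
  linarith

/-- The even-part convolution. -/
noncomputable def Cc (m : ℕ) : ℝ := ∑ n ∈ range (m + 1), (-1 : ℝ) ^ n * pp n * qq (m - n)

lemma key_lemma (m : ℕ) (hm : Even m) : (m : ℝ) * Cc m = 0 := by
  have hodd : Odd (m + 1) := Even.add_one hm
  have hm1 : (-1 : ℝ) ^ (m + 1) = -1 := by
    rw [pow_succ, hm.neg_one_pow]; ring
  -- step 1: rewrite m * Cc m as a sum of four pieces
  have h1 : (m : ℝ) * Cc m = ∑ n ∈ range (m + 1),
      ((-1 : ℝ) ^ n * pp (n + 1) * qq (m - n)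
        - (-1 : ℝ) ^ n * qq (n + 1) * qq (m - n)
        + (-1 : ℝ) ^ n * pp n * qq (m - n + 1)
        - (-1 : ℝ) ^ n * pp n * pp (m - n + 1)) := by
    unfold Cc
    rw [Finset.mul_sum]
    apply sum_congr rfl
    intro n hn
    have hnm : n ≤ m := Nat.lt_succ_iff.mp (mem_range.mp hn)
    have hM : (m : ℝ) = (n : ℝ) + ((m - n : ℕ) : ℝ) := by
      rw [Nat.cast_sub hnm]; ring
    have expand : ((n : ℝ) + ((m - n : ℕ) : ℝ)) * ((-1 : ℝ) ^ n * pp n * qq (m - n))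
        = (-1 : ℝ) ^ n * (((n : ℝ) * pp n) * qq (m - n))
          + (-1 : ℝ) ^ n * (pp n * (((m - n : ℕ) : ℝ) * qq (m - n))) := by ring
    rw [hM, expand, idA n, idB (m - n)]
    ring
  -- the four sums
  have hS1 : ∑ n ∈ range (m + 1), (-1 : ℝ) ^ n * pp (n + 1) * qq (m - n)
      = qq (m + 1) - Cc (m + 1) := by
    have h := Finset.sum_range_succ' (fun n => (-1 : ℝ) ^ n * pp n * qq (m + 1 - n)) (m + 1)
    have hL : ∑ n ∈ range (m + 1 + 1), (-1 : ℝ) ^ n * pp n * qq (m + 1 - n) = Cc (m + 1) := rfl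
    have hshift : ∑ i ∈ range (m + 1),
        (fun n => (-1 : ℝ) ^ n * pp n * qq (m + 1 - n)) (i + 1)
        = ∑ i ∈ range (m + 1), -((-1 : ℝ) ^ i * pp (i + 1) * qq (m - i)) := by
      apply sum_congr rfl
      intro i hi
      simp only
      have e : m + 1 - (i + 1) = m - i := by omega
      rw [e, pow_succ]
      ring
    rw [hshift, Finset.sum_neg_distrib] at h
    simp only [pow_zero, pp_zero, Nat.sub_zero, one_mul, mul_one] at h
    rw [hL] at h
    linarith
  have hS2 : ∑ n ∈ range (m + 1), (-1 : ℝ) ^ n * qq (n + 1) * qq (m - n) = qq (m + 1) := by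
    have hanti := antisym qq (m + 1) hodd
    have h := Finset.sum_range_succ' (fun n => (-1 : ℝ) ^ n * qq n * qq (m + 1 - n)) (m + 1)
    rw [hanti] at h
    have hshift : ∑ i ∈ range (m + 1),
        (fun n => (-1 : ℝ) ^ n * qq n * qq (m + 1 - n)) (i + 1)
        = ∑ i ∈ range (m + 1), -((-1 : ℝ) ^ i * qq (i + 1) * qq (m - i)) := by
      apply sum_congr rfl
      intro i hi
      simp only
      have e : m + 1 - (i + 1) = m - i := by omega
      rw [e, pow_succ]
      ring
    rw [hshift, Finset.sum_neg_distrib] at h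
    simp only [pow_zero, qq_zero, Nat.sub_zero, one_mul, mul_one] at h
    linarith
  have hS3 : ∑ n ∈ range (m + 1), (-1 : ℝ) ^ n * pp n * qq (m - n + 1)
      = Cc (m + 1) + pp (m + 1) := by
    have h := Finset.sum_range_succ (fun n => (-1 : ℝ) ^ n * pp n * qq (m + 1 - n)) (m + 1)
    have hL : ∑ n ∈ range (m + 1 + 1), (-1 : ℝ) ^ n * pp n * qq (m + 1 - n) = Cc (m + 1) := rfl
    have hcg : ∑ n ∈ range (m + 1),
        (fun n => (-1 : ℝ) ^ n * pp n * qq (m + 1 - n)) n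
        = ∑ n ∈ range (m + 1), (-1 : ℝ) ^ n * pp n * qq (m - n + 1) := by
      apply sum_congr rfl
      intro n hn
      have hnm : n ≤ m := Nat.lt_succ_iff.mp (mem_range.mp hn)
      have e : m + 1 - n = m - n + 1 := by omega
      simp only [e]
    rw [hcg] at h
    simp only [Nat.sub_self, hm1, qq_zero, mul_one] at h
    rw [hL] at h
    linarith
  have hS4 : ∑ n ∈ range (m + 1), (-1 : ℝ) ^ n * pp n * pp (m - n + 1) = pp (m + 1) := by
    have hanti := antisym pp (m + 1) hodd
    have h := Finset.sum_range_succ (fun n => (-1 : ℝ) ^ n * pp n * pp (m + 1 - n)) (m + 1)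
    rw [hanti] at h
    have hcg : ∑ n ∈ range (m + 1),
        (fun n => (-1 : ℝ) ^ n * pp n * pp (m + 1 - n)) n
        = ∑ n ∈ range (m + 1), (-1 : ℝ) ^ n * pp n * pp (m - n + 1) := by
      apply sum_congr rfl
      intro n hn
      have hnm : n ≤ m := Nat.lt_succ_iff.mp (mem_range.mp hn)
      have e : m + 1 - n = m - n + 1 := by omega
      simp only [e]
    rw [hcg] at h
    simp only [Nat.sub_self, hm1, pp_zero, mul_one] at h
    linarith
  rw [h1]
  rw [Finset.sum_sub_distrib, Finset.sum_add_distrib, Finset.sum_sub_distrib]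
  rw [hS1, hS2, hS3, hS4]
  ring

lemma fSeq_eq (x : ℝ) (n : ℕ) : fSeq x n = pp n * x ^ n := by
  have hsq : ((-1 : ℝ) ^ n) * ((-1 : ℝ) ^ n) = 1 := by rw [← mul_pow]; norm_num
  unfold fSeq
  rw [alph_eq]
  calc (-1 : ℝ) ^ n * ((-1) ^ n * pp n) * x ^ n
      = ((-1 : ℝ) ^ n * (-1) ^ n) * pp n * x ^ n := by ring
    _ = pp n * x ^ n := by rw [hsq]; ring

lemma hSeq_eq (x : ℝ) (n : ℕ) : hSeq x n = qq n * x ^ n := by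
  have hsq : ((-1 : ℝ) ^ n) * ((-1 : ℝ) ^ n) = 1 := by rw [← mul_pow]; norm_num
  unfold hSeq qq
  rw [alph_eq]
  calc -((-1 : ℝ) ^ n * ((2 * (n : ℝ) + 1) / (2 * (n : ℝ) - 1)) * ((-1) ^ n * pp n) * x ^ n)
      = ((-1 : ℝ) ^ n * (-1) ^ n) * (-((2 * (n : ℝ) + 1) / (2 * (n : ℝ) - 1)) * pp n * x ^ n) := by
        ring
    _ = -((2 * (n : ℝ) + 1) / (2 * (n : ℝ) - 1)) * pp n * x ^ n := by rw [hsq]; ring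

/-- Scalar form of the unitarity of Givental's fundamental solution
(`f(z)·h(−z) + f(−z)·h(z) = 2`): for every real `x` and every `m ≥ 1`,
`∑_{n=0}^{m} ((−1)ⁿ + (−1)^{m−n})·fₙ·h_{m−n} = 0`. -/
theorem stmt12 (x : ℝ) (m : ℕ) (hm : 1 ≤ m) :
    ∑ n ∈ Finset.range (m + 1),
      (((-1 : ℝ) ^ n + (-1 : ℝ) ^ (m - n)) * fSeq x n * hSeq x (m - n)) = 0 := by
  rcases Nat.even_or_odd m with hme | hmo
  · -- even case
    have hmne : (m : ℝ) ≠ 0 := by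
      have : m ≠ 0 := by omega
      exact_mod_cast this
    have hC : Cc m = 0 := by
      have := key_lemma m hme
      rcases mul_eq_zero.mp this with h | h
      · exact absurd h hmne
      · exact h
    have hstep : ∑ n ∈ Finset.range (m + 1),
        (((-1 : ℝ) ^ n + (-1 : ℝ) ^ (m - n)) * fSeq x n * hSeq x (m - n))
        = ∑ n ∈ range (m + 1), ((-1 : ℝ) ^ n * pp n * qq (m - n)) * (2 * x ^ m) := by
      apply sum_congr rfl
      intro n hn
      have hnm : n ≤ m := Nat.lt_succ_iff.mp (mem_range.mp hn)
      rw [fSeq_eq, hSeq_eq, neg_one_pow_sub hnm, hme.neg_one_pow]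
      have hx : x ^ n * x ^ (m - n) = x ^ m := by
        rw [← pow_add, Nat.add_sub_cancel' hnm]
      calc ((-1 : ℝ) ^ n + 1 * (-1) ^ n) * (pp n * x ^ n) * (qq (m - n) * x ^ (m - n))
          = (2 * (-1 : ℝ) ^ n * pp n * qq (m - n)) * (x ^ n * x ^ (m - n)) := by ring
        _ = (2 * (-1 : ℝ) ^ n * pp n * qq (m - n)) * x ^ m := by rw [hx]
        _ = ((-1 : ℝ) ^ n * pp n * qq (m - n)) * (2 * x ^ m) := by ring
    rw [hstep, ← Finset.sum_mul]
    have : ∑ n ∈ range (m + 1), (-1 : ℝ) ^ n * pp n * qq (m - n) = Cc m := rfl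
    rw [this, hC, zero_mul]
  · -- odd case: each term vanishes
    apply Finset.sum_eq_zero
    intro n hn
    have hnm : n ≤ m := Nat.lt_succ_iff.mp (mem_range.mp hn)
    rw [neg_one_pow_sub hnm, hmo.neg_one_pow]
    ring
end

section
/- For every real x and all integers k, l ≥ 0: ∑_{n=0}^{k} B_{l+n+1, k−n} = ∑_{n=0}^{l} B_{k+n+1, l−n}. (Equivalently, the coefficients V^{+−}_{kl} = i·(−1)^l·∑_{n=0}^{k} B_{l+n+1,k−n} and V^{−+}_{kl} = i·(−1)^k·∑_{n=0}^{k} B_{l+n+1,k−n} satisfy the relations V^{+−}_{kl} = V^{−+}_{lk} and V^{+−}_{kl} = (−1)^{k−l}·V^{+−}_{lk}.) -/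
/-- `B_{p,q} = ((2(p−q))/((2p−1)(2q−1)))·α_p·α_q·x^{p+q}` for `p, q ≥ 0`. -/
noncomputable def Bcoef (x : ℝ) (p q : ℕ) : ℝ :=
  ((2 * ((p : ℝ) - (q : ℝ))) / ((2 * (p : ℝ) - 1) * (2 * (q : ℝ) - 1))) *
    alph p * alph q * x ^ (p + q)

lemma Bcoef_antisymm (x : ℝ) (p q : ℕ) : Bcoef x p q = - Bcoef x q p := by
  unfold Bcoef
  rw [Nat.add_comm q p]
  ring

/-- For every real `x` and all `k, l ≥ 0`:
`∑_{n=0}^{k} B_{l+n+1,k−n} = ∑_{n=0}^{l} B_{k+n+1,l−n}` (equivalently,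
`V^{+−}_{kl} = V^{−+}_{lk}` and `V^{+−}_{kl} = (−1)^{k−l}·V^{+−}_{lk}`). -/
theorem stmt15 (x : ℝ) (k l : ℕ) :
    ∑ n ∈ Finset.range (k + 1), Bcoef x (l + n + 1) (k - n) =
      ∑ n ∈ Finset.range (l + 1), Bcoef x (k + n + 1) (l - n) := by
  set S := k + l + 1 with hS
  -- the full anti-diagonal sum vanishes by antisymmetry
  have hzero : ∑ p ∈ Finset.range (S + 1), Bcoef x p (S - p) = 0 := by
    have h := Finset.sum_range_reflect (fun p => Bcoef x p (S - p)) (S + 1)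
    have h2 : ∀ j ∈ Finset.range (S + 1),
        Bcoef x (S + 1 - 1 - j) (S - (S + 1 - 1 - j)) = - Bcoef x j (S - j) := by
      intro j hj
      rw [Finset.mem_range] at hj
      have h3 : S + 1 - 1 - j = S - j := by omega
      have h4 : S - (S - j) = j := by omega
      rw [h3, h4, Bcoef_antisymm]
    rw [Finset.sum_congr rfl h2, Finset.sum_neg_distrib] at h
    linarith
  -- split the full sum at l+1
  have hsplit : ∑ p ∈ Finset.Ico 0 (l + 1), Bcoef x p (S - p)
      + ∑ p ∈ Finset.Ico (l + 1) (S + 1), Bcoef x p (S - p)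
      = ∑ p ∈ Finset.Ico 0 (S + 1), Bcoef x p (S - p) :=
    Finset.sum_Ico_consecutive _ (by omega) (by omega)
  rw [← Finset.range_eq_Ico] at hsplit
  rw [Finset.range_eq_Ico] at hzero
  -- the upper piece is the LHS
  have hL : ∑ p ∈ Finset.Ico (l + 1) (S + 1), Bcoef x p (S - p)
      = ∑ n ∈ Finset.range (k + 1), Bcoef x (l + n + 1) (k - n) := by
    rw [Finset.sum_Ico_eq_sum_range]
    have hlen : S + 1 - (l + 1) = k + 1 := by omega
    rw [hlen]
    refine Finset.sum_congr rfl fun n hn => ?_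
    rw [Finset.mem_range] at hn
    have h1 : l + 1 + n = l + n + 1 := by omega
    have h2 : S - (l + n + 1) = k - n := by omega
    rw [h1, h2]
  -- the lower piece is minus the RHS
  have hR : ∑ p ∈ Finset.range (l + 1), Bcoef x p (S - p)
      = - ∑ n ∈ Finset.range (l + 1), Bcoef x (k + n + 1) (l - n) := by
    have h := Finset.sum_range_reflect (fun p => Bcoef x p (S - p)) (l + 1)
    rw [← h, ← Finset.sum_neg_distrib]
    refine Finset.sum_congr rfl fun n hn => ?_
    rw [Finset.mem_range] at hn
    have h1 : l + 1 - 1 - n = l - n := by omega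
    have h2 : S - (l - n) = k + n + 1 := by omega
    rw [h1, h2, Bcoef_antisymm]
  rw [← Finset.range_eq_Ico] at hzero
  rw [← Finset.range_eq_Ico] at hsplit
  rw [← hsplit] at hzero
  linarith [hzero, hL, hR]
end
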